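/- Let f ∈ S(m,L) with minimizer y_⋆ and set g(x) = f(x) - f(y_⋆) - (m/2)‖x-y_⋆‖². Define q_k = (L-m)·g(y_k) - ½‖∇g(y_k)‖² for a sequence y_k. Then q_k ≥ 0 for all k, and writing ỹ_k = y_k - y_⋆, ũ_k = ∇f(y_k) - ∇f(y_⋆): (i) (ũ_0 - mỹ_0)ᵀ(Lỹ_0 - ũ_0) ≥ q_0, and (ii) (ũ_t - mỹ_t)ᵀ(L(ỹ_t - ỹ_{t-1}) - (ũ_t - ũ_{t-1})) ≥ q_t - q_{t-1} for t ≥ 1. -/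

import Mathlib

open RealInnerProductSpace

section Aux

variable {F : Type*} [NormedAddCommGroup F] [InnerProductSpace ℝ F] [CompleteSpace F]

private lemma line_hasDerivAt (f : F → ℝ) (gf : F → F)
    (hgrad : ∀ x, HasGradientAt f (gf x) x) (x v : F) (t : ℝ) :
    HasDerivAt (fun s : ℝ => f (x + s • v)) ⟪gf (x + t • v), v⟫ t := by
  have h1 : HasDerivAt (fun s : ℝ => x + s • v) v t := by
    simpa using ((hasDerivAt_id t).smul_const v).const_add x
  have h2 := (hgrad (x + t • v)).hasFDerivAt.comp_hasDerivAt t h1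
  simp [InnerProductSpace.toDual_apply_apply] at h2
  exact h2

private lemma lower_lin (f : F → ℝ) (gf : F → F)
    (hgrad : ∀ x, HasGradientAt f (gf x) x)
    (hmono : ∀ a b, 0 ≤ ⟪gf a - gf b, a - b⟫) (x y : F) :
    f x + ⟪gf x, y - x⟫ ≤ f y := by
  set v := y - x with hv
  set φ : ℝ → ℝ := fun t => f (x + t • v) - t * ⟪gf x, v⟫ with hφdef
  have hφ : ∀ t : ℝ, HasDerivAt φ (⟪gf (x + t • v), v⟫ - ⟪gf x, v⟫) t := fun t =>
    (line_hasDerivAt f gf hgrad x v t).sub (hasDerivAt_mul_const _)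
  have hmonoφ : MonotoneOn φ (Set.Ici (0 : ℝ)) := by
    apply monotoneOn_of_hasDerivWithinAt_nonneg (convex_Ici 0)
      (fun t _ => (hφ t).continuousAt.continuousWithinAt)
      (fun t _ => (hφ t).hasDerivWithinAt)
    intro t ht
    rw [interior_Ici] at ht
    have h := hmono (x + t • v) x
    have hz : x + t • v - x = t • v := by abel
    rw [hz, real_inner_smul_right] at h
    have h' : 0 ≤ ⟪gf (x + t • v) - gf x, v⟫ :=
      nonneg_of_mul_nonneg_right h ht
    rw [inner_sub_left] at h'
    linarith
  have key := hmonoφ (Set.self_mem_Ici) (Set.mem_Ici.mpr zero_le_one) zero_le_one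
  have h0 : φ 0 = f x := by simp [hφdef]
  have h1 : φ 1 = f y - ⟪gf x, v⟫ := by
    simp only [hφdef, one_smul, one_mul]
    rw [hv, add_sub_cancel]
  rw [h0, h1] at key
  linarith

private lemma upper_quad (f : F → ℝ) (gf : F → F)
    (hgrad : ∀ x, HasGradientAt f (gf x) x) (K : ℝ)
    (hup : ∀ a b, ⟪gf a - gf b, a - b⟫ ≤ K * ‖a - b‖ ^ 2) (x y : F) :
    f y ≤ f x + ⟪gf x, y - x⟫ + K / 2 * ‖y - x‖ ^ 2 := by
  set v := y - x with hv
  set φ : ℝ → ℝ := fun t => f (x + t • v) - t * ⟪gf x, v⟫ - K / 2 * (t ^ 2 * ‖v‖ ^ 2)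
    with hφdef
  have hφ : ∀ t : ℝ,
      HasDerivAt φ (⟪gf (x + t • v), v⟫ - ⟪gf x, v⟫ - K / 2 * (2 * t * ‖v‖ ^ 2)) t := by
    intro t
    have h1 := (line_hasDerivAt f gf hgrad x v t).sub (hasDerivAt_mul_const ⟪gf x, v⟫)
    have h2 : HasDerivAt (fun s : ℝ => K / 2 * (s ^ 2 * ‖v‖ ^ 2)) (K / 2 * (2 * t * ‖v‖ ^ 2)) t := by
      have := ((hasDerivAt_pow 2 t).mul_const (‖v‖ ^ 2)).const_mul (K / 2)
      simpa [mul_comm, mul_assoc, mul_left_comm] using this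
    exact h1.sub h2
  have hanti : AntitoneOn φ (Set.Ici (0 : ℝ)) := by
    apply antitoneOn_of_hasDerivWithinAt_nonpos (convex_Ici 0)
      (fun t _ => (hφ t).continuousAt.continuousWithinAt)
      (fun t _ => (hφ t).hasDerivWithinAt)
    intro t ht
    rw [interior_Ici] at ht
    have h := hup (x + t • v) x
    have hz : x + t • v - x = t • v := by abel
    rw [hz, real_inner_smul_right, norm_smul] at h
    have h' : ⟪gf (x + t • v) - gf x, v⟫ ≤ K * (t * ‖v‖ ^ 2) := by
      have ht' : 0 < t := ht
      have : t * ⟪gf (x + t • v) - gf x, v⟫ ≤ t * (K * (t * ‖v‖ ^ 2)) := by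
        calc t * ⟪gf (x + t • v) - gf x, v⟫ ≤ K * (‖t‖ * ‖v‖) ^ 2 := h
        _ = t * (K * (t * ‖v‖ ^ 2)) := by
            rw [Real.norm_eq_abs, abs_of_pos ht']; ring
      exact le_of_mul_le_mul_left this ht'
    rw [inner_sub_left] at h'
    nlinarith
  have key := hanti (Set.self_mem_Ici) (Set.mem_Ici.mpr zero_le_one) zero_le_one
  have h0 : φ 0 = f x := by simp [hφdef]
  have h1 : φ 1 = f y - ⟪gf x, v⟫ - K / 2 * ‖v‖ ^ 2 := by
    simp only [hφdef, one_smul, one_mul, one_pow]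
    rw [hv, add_sub_cancel]
  rw [h0, h1] at key
  linarith

private lemma cocoercive (f : F → ℝ) (gf : F → F)
    (hgrad : ∀ x, HasGradientAt f (gf x) x) (K : ℝ) (hK : 0 < K)
    (hmono : ∀ a b, 0 ≤ ⟪gf a - gf b, a - b⟫)
    (hup : ∀ a b, ⟪gf a - gf b, a - b⟫ ≤ K * ‖a - b‖ ^ 2) (x z : F) :
    f x + ⟪gf x, z - x⟫ + 1 / (2 * K) * ‖gf z - gf x‖ ^ 2 ≤ f z := by
  set w : F := z - (1 / K) • (gf z - gf x) with hw
  have hA := upper_quad f gf hgrad K hup z w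
  have hB := lower_lin f gf hgrad hmono x w
  have hwz : w - z = -((1 / K) • (gf z - gf x)) := by rw [hw]; abel
  have hA' : f w ≤ f z - (1 / K) * ⟪gf z, gf z - gf x⟫
      + 1 / (2 * K) * ‖gf z - gf x‖ ^ 2 := by
    have h1 : ⟪gf z, w - z⟫ = -((1 / K) * ⟪gf z, gf z - gf x⟫) := by
      rw [hwz, inner_neg_right, real_inner_smul_right]
    have h2 : ‖w - z‖ ^ 2 = (1 / K) ^ 2 * ‖gf z - gf x‖ ^ 2 := by
      rw [hwz, norm_neg, norm_smul, mul_pow, Real.norm_eq_abs, sq_abs]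
    rw [h1, h2] at hA
    have : K / 2 * ((1 / K) ^ 2 * ‖gf z - gf x‖ ^ 2)
        = 1 / (2 * K) * ‖gf z - gf x‖ ^ 2 := by
      field_simp
    linarith [hA, this ▸ hA]
  have hB' : f x + ⟪gf x, z - x⟫ - (1 / K) * ⟪gf x, gf z - gf x⟫ ≤ f w := by
    have h1 : ⟪gf x, w - x⟫ = ⟪gf x, z - x⟫ - (1 / K) * ⟪gf x, gf z - gf x⟫ := by
      have : w - x = (z - x) - (1 / K) • (gf z - gf x) := by rw [hw]; abel
      rw [this, inner_sub_right, real_inner_smul_right]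
    rw [h1] at hB
    linarith
  have hsq : (1 / K) * ⟪gf z, gf z - gf x⟫ - (1 / K) * ⟪gf x, gf z - gf x⟫
      = (1 / K) * ‖gf z - gf x‖ ^ 2 := by
    rw [← mul_sub, ← inner_sub_left, real_inner_self_eq_norm_sq]
  have hfin : (1 / K) * ‖gf z - gf x‖ ^ 2 - 1 / (2 * K) * ‖gf z - gf x‖ ^ 2
      = 1 / (2 * K) * ‖gf z - gf x‖ ^ 2 := by field_simp; ring
  linarith

end Aux

/-- The key telescoping inequalities used to prove the off-by-one IQC: with
`g(x) = f(x) - f(y⋆) - (m/2)‖x-y⋆‖²` and `q_k = (L-m)g(y_k) - ½‖∇g(y_k)‖²`, one has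
`q_k ≥ 0`, the sector term is bounded below by `q_0`, and the off-by-one term at time
`t` is bounded below by `q_t - q_{t-1}`. -/
theorem off_by_one_key_inequalities {d : ℕ} (m L : ℝ) (hm : 0 < m) (hmL : m < L)
    (f : EuclideanSpace ℝ (Fin d) → ℝ)
    (gf : EuclideanSpace ℝ (Fin d) → EuclideanSpace ℝ (Fin d))
    (hgrad : ∀ x, HasGradientAt f (gf x) x)
    (hlow : ∀ x y, m * ‖x - y‖ ^ 2 ≤ ⟪gf x - gf y, x - y⟫)
    (hup : ∀ x y, ⟪gf x - gf y, x - y⟫ ≤ L * ‖x - y‖ ^ 2)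
    (ystar : EuclideanSpace ℝ (Fin d)) (hstar : gf ystar = 0)
    (y : ℕ → EuclideanSpace ℝ (Fin d)) :
    (∀ k : ℕ, 0 ≤
      (L - m) * (f (y k) - f ystar - (m / 2) * ‖y k - ystar‖ ^ 2)
        - (1 / 2) * ‖gf (y k) - m • (y k - ystar)‖ ^ 2) ∧
    (⟪gf (y 0) - gf ystar - m • (y 0 - ystar), L • (y 0 - ystar) - (gf (y 0) - gf ystar)⟫ ≥
      (L - m) * (f (y 0) - f ystar - (m / 2) * ‖y 0 - ystar‖ ^ 2)
        - (1 / 2) * ‖gf (y 0) - m • (y 0 - ystar)‖ ^ 2) ∧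
    (∀ t : ℕ, 1 ≤ t →
      ⟪gf (y t) - gf ystar - m • (y t - ystar),
          L • ((y t - ystar) - (y (t - 1) - ystar))
            - ((gf (y t) - gf ystar) - (gf (y (t - 1)) - gf ystar))⟫ ≥
        ((L - m) * (f (y t) - f ystar - (m / 2) * ‖y t - ystar‖ ^ 2)
            - (1 / 2) * ‖gf (y t) - m • (y t - ystar)‖ ^ 2)
          - ((L - m) * (f (y (t - 1)) - f ystar - (m / 2) * ‖y (t - 1) - ystar‖ ^ 2)
            - (1 / 2) * ‖gf (y (t - 1)) - m • (y (t - 1) - ystar)‖ ^ 2)) := by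
  classical
  -- the shifted function g and its gradient gg
  have hK : (0:ℝ) < L - m := by linarith
  -- gradient of the quadratic part
  have hsq : ∀ x : EuclideanSpace ℝ (Fin d), HasGradientAt (fun z : EuclideanSpace ℝ (Fin d) => m / 2 * ‖z - ystar‖ ^ 2)
      (m • (x - ystar)) x := by
    intro x
    rw [hasGradientAt_iff_hasFDerivAt]
    have h1 : HasFDerivAt (fun z : EuclideanSpace ℝ (Fin d) => z - ystar) (ContinuousLinearMap.id ℝ _) x :=
      (hasFDerivAt_id x).sub_const ystar
    have h2 := ((h1.inner ℝ h1).const_mul (m / 2) :)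
    have hfun : (fun z : EuclideanSpace ℝ (Fin d) => m / 2 * ‖z - ystar‖ ^ 2)
        = fun z : EuclideanSpace ℝ (Fin d) => m / 2 * ⟪z - ystar, z - ystar⟫ := by
      funext z; rw [real_inner_self_eq_norm_sq]
    rw [hfun]
    convert h2 using 1
    · rfl
    ext v
    simp only [InnerProductSpace.toDual_apply_apply, ContinuousLinearMap.coe_smul', Pi.smul_apply,
      ContinuousLinearMap.coe_comp', Function.comp_apply, ContinuousLinearMap.prod_apply,
      ContinuousLinearMap.coe_id', id_eq, fderivInnerCLM_apply, smul_eq_mul]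
    rw [real_inner_smul_left, real_inner_comm v (x - ystar)]
    ring
  have hggrad : ∀ x : EuclideanSpace ℝ (Fin d), HasGradientAt
      (fun z : EuclideanSpace ℝ (Fin d) => f z - f ystar - m / 2 * ‖z - ystar‖ ^ 2)
      (gf x - m • (x - ystar)) x := by
    intro x
    rw [hasGradientAt_iff_hasFDerivAt]
    have h1 := ((hgrad x).hasFDerivAt.sub (hsq x).hasFDerivAt).sub_const (f ystar)
    have hfun : (fun z : EuclideanSpace ℝ (Fin d) => f z - f ystar - m / 2 * ‖z - ystar‖ ^ 2)
        = fun z : EuclideanSpace ℝ (Fin d) => (f z - m / 2 * ‖z - ystar‖ ^ 2) - f ystar := by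
      funext z; ring
    rw [hfun, map_sub]
    exact h1
  have hggm : ∀ a b : EuclideanSpace ℝ (Fin d), 0 ≤ ⟪(gf a - m • (a - ystar)) - (gf b - m • (b - ystar)), a - b⟫ := by
    intro a b
    have hv : (gf a - m • (a - ystar)) - (gf b - m • (b - ystar))
        = (gf a - gf b) - m • (a - b) := by module
    rw [hv, inner_sub_left, real_inner_smul_left, real_inner_self_eq_norm_sq]
    have := hlow a b
    linarith
  have hggK : ∀ a b : EuclideanSpace ℝ (Fin d), ⟪(gf a - m • (a - ystar)) - (gf b - m • (b - ystar)), a - b⟫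
      ≤ (L - m) * ‖a - b‖ ^ 2 := by
    intro a b
    have hv : (gf a - m • (a - ystar)) - (gf b - m • (b - ystar))
        = (gf a - gf b) - m • (a - b) := by module
    rw [hv, inner_sub_left, real_inner_smul_left, real_inner_self_eq_norm_sq]
    have := hup a b
    linarith
  have hco : ∀ x z : EuclideanSpace ℝ (Fin d),
      (f x - f ystar - m / 2 * ‖x - ystar‖ ^ 2)
        + ⟪gf x - m • (x - ystar), z - x⟫
        + 1 / (2 * (L - m)) * ‖(gf z - m • (z - ystar)) - (gf x - m • (x - ystar))‖ ^ 2
      ≤ f z - f ystar - m / 2 * ‖z - ystar‖ ^ 2 :=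
    fun x z => cocoercive _ _ hggrad (L - m) hK hggm hggK x z
  have hstar' : gf ystar - m • (ystar - ystar) = 0 := by simp [hstar]
  refine ⟨?_, ?_, ?_⟩
  · -- q_k ≥ 0
    intro k
    have h := hco ystar (y k)
    rw [hstar'] at h
    simp only [sub_self, norm_zero, inner_zero_left, sub_zero] at h
    have h2 : (L - m) * (1 / (2 * (L - m)) * ‖gf (y k) - m • (y k - ystar)‖ ^ 2)
        = (1 / 2) * ‖gf (y k) - m • (y k - ystar)‖ ^ 2 := by
      field_simp
    have h3 := mul_le_mul_of_nonneg_left h hK.le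
    linarith [h3, h2]
  · -- sector term ≥ q_0
    have h := hco (y 0) ystar
    rw [hstar'] at h
    rw [show ystar - y 0 = -(y 0 - ystar) by abel, inner_neg_right,
      show (0 : EuclideanSpace ℝ (Fin d)) - (gf (y 0) - m • (y 0 - ystar)) = -(gf (y 0) - m • (y 0 - ystar)) by abel,
      norm_neg] at h
    simp only [sub_self, norm_zero] at h
    rw [hstar, sub_zero]
    have hv : L • (y 0 - ystar) - gf (y 0)
        = (L - m) • (y 0 - ystar) - (gf (y 0) - m • (y 0 - ystar)) := by module
    rw [hv, inner_sub_right, real_inner_smul_right, real_inner_self_eq_norm_sq]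
    have h2 : (L - m) * (1 / (2 * (L - m)) * ‖gf (y 0) - m • (y 0 - ystar)‖ ^ 2)
        = (1 / 2) * ‖gf (y 0) - m • (y 0 - ystar)‖ ^ 2 := by
      field_simp
    have h3 := mul_le_mul_of_nonneg_left h hK.le
    linarith [h3, h2]
  · -- off-by-one term ≥ q_t - q_{t-1}
    intro t _
    have h := hco (y t) (y (t - 1))
    rw [hstar, sub_zero, sub_zero]
    set a : EuclideanSpace ℝ (Fin d) := gf (y t) - m • (y t - ystar) with ha
    set b : EuclideanSpace ℝ (Fin d) := gf (y (t - 1)) - m • (y (t - 1) - ystar) with hb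
    have hv : L • ((y t - ystar) - (y (t - 1) - ystar)) - (gf (y t) - gf (y (t - 1)))
        = (L - m) • (y t - y (t - 1)) - (a - b) := by
      rw [ha, hb]; module
    rw [hv, inner_sub_right, real_inner_smul_right]
    rw [show y (t - 1) - y t = -(y t - y (t - 1)) by abel, inner_neg_right] at h
    have hpol : ‖b - a‖ ^ 2 = ‖b‖ ^ 2 - 2 * ⟪a, b⟫ + ‖a‖ ^ 2 := by
      rw [norm_sub_sq_real, real_inner_comm b a]
    have hab : ⟪a, a - b⟫ = ‖a‖ ^ 2 - ⟪a, b⟫ := by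
      rw [inner_sub_right, real_inner_self_eq_norm_sq]
    have h2 : (L - m) * (1 / (2 * (L - m)) * ‖b - a‖ ^ 2) = (1 / 2) * ‖b - a‖ ^ 2 := by
      field_simp
    rw [hab]
    have h3 := mul_le_mul_of_nonneg_left h hK.le
    linarith [h3, h2, hpol]
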